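/- Let m ≥ 2 and r ≥ 1. The probability that there exists a nonzero vector u ∈ (ZMod 2)^m such that B_c(u, e_j) = ∑_{i ≠ j} u_i c_{{i,j}} = 0 for every j ∈ Fin m (where e_j is the j-th standard basis vector) is at most (2^m − 1) · 2^{−(m−1)r}. (In group-theoretic terms: with this probability bound failing only rarely, no nontrivial product ∏_{s∈S} x_s is central in the random group, so the center is spanned by z_1,…,z_r, w_1,…,w_m alone.) -/
import Mathlib


open MeasureTheory

/-- Unordered pairs of distinct elements of `Fin m`. -/
abbrev EdgeIdx (m : ℕ) := {e : Sym2 (Fin m) // ¬ e.IsDiag}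

instance (r : ℕ) : MeasurableSpace (Fin r → ZMod 2) := ⊤

/-- The product of uniform measures: a family of independent random variables `c_e`,
indexed by the unordered pairs of distinct elements of `Fin m`, each uniformly
distributed on `(ZMod 2)^r`. -/
noncomputable def groupMeasure (m r : ℕ) : Measure (EdgeIdx m → (Fin r → ZMod 2)) :=
  Measure.pi fun _ => (PMF.uniformOfFintype (Fin r → ZMod 2)).toMeasure

/-- `B_c(u, v) = ∑_{i ≠ j} u_i v_j c_{{i,j}} ∈ (ZMod 2)^r`. -/
def B {m r : ℕ} (c : EdgeIdx m → (Fin r → ZMod 2)) (u v : Fin m → ZMod 2) :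
    Fin r → ZMod 2 :=
  ∑ i : Fin m, ∑ j : Fin m,
    if h : i ≠ j then (u i * v j) • c ⟨s(i, j), fun hd => h (Sym2.mk_isDiag_iff.mp hd)⟩
    else 0

section Aux

variable {m r : ℕ}

lemma meas_all (s : Set (EdgeIdx m → Fin r → ZMod 2)) : MeasurableSet s := by
  have h1 : ∀ x : EdgeIdx m → Fin r → ZMod 2, MeasurableSet ({x} : Set _) := by
    intro x
    rw [← Set.univ_pi_singleton]
    exact MeasurableSet.univ_pi fun i => MeasurableSpace.measurableSet_top
  have h2 : s = ⋃ x ∈ s, {x} := by simp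
  rw [h2]
  exact MeasurableSet.biUnion (Set.to_countable s) fun x _ => h1 x

lemma gm_singleton (x : EdgeIdx m → Fin r → ZMod 2) :
    groupMeasure m r {x} = (((2 : ENNReal) ^ r)⁻¹) ^ Fintype.card (EdgeIdx m) := by
  rw [groupMeasure, ← Set.univ_pi_singleton, Measure.pi_pi]
  have h : ∀ e : EdgeIdx m,
      (PMF.uniformOfFintype (Fin r → ZMod 2)).toMeasure {x e} = ((2 : ENNReal) ^ r)⁻¹ := by
    intro e
    rw [PMF.toMeasure_apply_singleton _ _ MeasurableSpace.measurableSet_top,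
      PMF.uniformOfFintype_apply]
    congr 1
    simp [Fintype.card_fun]
  simp [h, Finset.prod_const, Finset.card_univ]

lemma gm_apply (s : Set (EdgeIdx m → Fin r → ZMod 2)) :
    groupMeasure m r s =
      (s.toFinite.toFinset.card : ENNReal) *
        (((2 : ENNReal) ^ r)⁻¹) ^ Fintype.card (EdgeIdx m) := by
  have h2 : s = ⋃ x ∈ s.toFinite.toFinset, ({x} : Set _) := by simp
  conv_lhs => rw [h2]
  rw [measure_biUnion_finset ?_ fun x _ => meas_all _]
  · rw [Finset.sum_congr rfl fun x _ => gm_singleton x, Finset.sum_const, nsmul_eq_mul]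
  · intro a _ b _ hab
    simp [Set.disjoint_singleton, hab]

lemma B_single_eq (c : EdgeIdx m → Fin r → ZMod 2) (u : Fin m → ZMod 2) (j : Fin m) :
    B c u (Pi.single j 1) =
      ∑ i : Fin m, if h : i ≠ j then
        u i • c ⟨s(i, j), fun hd => h (Sym2.mk_isDiag_iff.mp hd)⟩ else 0 := by
  unfold B
  refine Finset.sum_congr rfl fun i _ => ?_
  rw [Finset.sum_eq_single j]
  · split <;> simp
  · intro j' _ hj'
    rw [Pi.single_eq_of_ne hj']
    split <;> simp
  · simp

lemma pivot_eq (u : Fin m → ZMod 2) (i0 : Fin m) (hu : u i0 = 1)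
    (c : EdgeIdx m → Fin r → ZMod 2) (j : Fin m) (hj : i0 ≠ j)
    (hc : B c u (Pi.single j 1) = 0) :
    c ⟨s(i0, j), fun hd => hj (Sym2.mk_isDiag_iff.mp hd)⟩ =
      ∑ i ∈ Finset.univ.erase i0,
        if h : i ≠ j then
          u i • c ⟨s(i, j), fun hd => h (Sym2.mk_isDiag_iff.mp hd)⟩ else 0 := by
  have h1 := (B_single_eq c u j).symm.trans hc
  rw [← Finset.add_sum_erase _ _ (Finset.mem_univ i0), dif_pos hj, hu, one_smul] at h1
  set S := ∑ i ∈ Finset.univ.erase i0,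
      if h : i ≠ j then
        u i • c ⟨s(i, j), fun hd => h (Sym2.mk_isDiag_iff.mp hd)⟩ else 0
  set a := c ⟨s(i0, j), fun hd => hj (Sym2.mk_isDiag_iff.mp hd)⟩
  have hSS : S + S = 0 := by
    funext k
    simp only [Pi.add_apply, Pi.zero_apply]
    have : (2 : ZMod 2) = 0 := by decide
    calc S k + S k = 2 * S k := by ring
    _ = 0 := by rw [this, zero_mul]
  calc a = a + (S + S) := by rw [hSS, add_zero]
  _ = (a + S) + S := by ring
  _ = S := by rw [h1, zero_add]

lemma event_injOn (u : Fin m → ZMod 2) (i0 : Fin m) (hu : u i0 = 1) :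
    Set.InjOn (fun (c : EdgeIdx m → Fin r → ZMod 2) (e : {e : EdgeIdx m // i0 ∉ e.1}) => c e.1)
      {c | ∀ j, B c u (Pi.single j 1) = 0} := by
  intro c hc c' hc' hcc
  have hrest : ∀ (e : EdgeIdx m), i0 ∉ e.1 → c e = c' e :=
    fun e he => congrFun hcc ⟨e, he⟩
  funext e
  by_cases he : i0 ∉ e.1
  · exact hrest e he
  rw [not_not] at he
  obtain ⟨j, hj⟩ : ∃ j, e.1 = s(i0, j) := ⟨Sym2.Mem.other he, (Sym2.other_spec he).symm⟩
  have hij : i0 ≠ j := fun h => e.2 (by rw [hj]; exact Sym2.mk_isDiag_iff.mpr h)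
  have he' : e = ⟨s(i0, j), fun hd => hij (Sym2.mk_isDiag_iff.mp hd)⟩ := Subtype.ext hj
  rw [he', pivot_eq u i0 hu c j hij (hc j), pivot_eq u i0 hu c' j hij (hc' j)]
  refine Finset.sum_congr rfl fun i hi => ?_
  rcases eq_or_ne i j with h | h
  · simp [h]
  · have hi0 : i ≠ i0 := (Finset.mem_erase.mp hi).1
    rw [dif_pos h, dif_pos h,
      hrest ⟨s(i, j), fun hd => h (Sym2.mk_isDiag_iff.mp hd)⟩ (by
        rw [Sym2.mem_iff]
        push_neg
        exact ⟨fun hh => hi0 hh.symm, hij⟩)]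

lemma card_mem_edges (i0 : Fin m) :
    Fintype.card {e : EdgeIdx m // i0 ∈ e.1} = m - 1 := by
  classical
  have hcard : Fintype.card {j : Fin m // ¬ j = i0} = m - 1 := by
    rw [Fintype.card_subtype_compl]
    simp
  rw [← hcard]
  have hf : Function.Bijective
      (fun (j : {j : Fin m // ¬ j = i0}) =>
        (⟨⟨s(i0, j.1), fun hd => j.2 (Sym2.mk_isDiag_iff.mp hd).symm⟩,
          Sym2.mem_mk_left i0 j.1⟩ : {e : EdgeIdx m // i0 ∈ e.1})) := by
    constructor
    · intro j j' hjj
      have : s(i0, j.1) = s(i0, j'.1) := congrArg (fun e => e.1.1) hjj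
      exact Subtype.ext (Sym2.congr_right.mp this)
    · rintro ⟨e, he⟩
      have hspec := Sym2.other_spec he
      refine ⟨⟨Sym2.Mem.other he, fun h => e.2 ?_⟩, ?_⟩
      · rw [← hspec, h]
        exact Sym2.mk_isDiag_iff.mpr rfl
      · exact Subtype.ext (Subtype.ext hspec)
  exact (Fintype.card_of_bijective hf).symm

lemma card_edges_split (i0 : Fin m) :
    Fintype.card (EdgeIdx m) = Fintype.card {e : EdgeIdx m // i0 ∉ e.1} + (m - 1) := by
  classical
  have h := Fintype.card_congr (Equiv.sumCompl (fun e : EdgeIdx m => i0 ∈ e.1))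
  rw [Fintype.card_sum, card_mem_edges i0] at h
  omega

end Aux

/-- The probability that there is a nonzero `u ∈ (ZMod 2)^m` with
`B_c(u, e_j) = ∑_{i ≠ j} u_i c_{{i,j}} = 0` for every `j` (i.e. that some nontrivial
product `∏_{s∈S} x_s` is central in the random group) is at most
`(2^m − 1) · 2^(−(m−1)r)`. -/
theorem prob_extra_central_element (m r : ℕ) (hm : 2 ≤ m) (hr : 1 ≤ r) :
    groupMeasure m r
        {c | ∃ u : Fin m → ZMod 2, u ≠ 0 ∧
          ∀ j : Fin m, B c u (Pi.single j 1) = 0}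
      ≤ ((2 : ENNReal) ^ m - 1) * ((2 : ENNReal) ^ ((m - 1) * r))⁻¹ := by
  classical
  set T : Finset (Fin m → ZMod 2) := Finset.univ.erase 0 with hT
  have hsub : {c : EdgeIdx m → Fin r → ZMod 2 | ∃ u : Fin m → ZMod 2, u ≠ 0 ∧
          ∀ j : Fin m, B c u (Pi.single j 1) = 0} ⊆
      ⋃ u ∈ T, {c : EdgeIdx m → Fin r → ZMod 2 | ∀ j, B c u (Pi.single j 1) = 0} := by
    rintro c ⟨u, hu, h⟩
    exact Set.mem_biUnion (Finset.mem_erase.mpr ⟨hu, Finset.mem_univ _⟩) h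
  refine le_trans (measure_mono hsub) (le_trans (measure_biUnion_finset_le _ _) ?_)
  have ha0 : ((2 : ENNReal) ^ r) ≠ 0 := by positivity
  have hatop : ((2 : ENNReal) ^ r) ≠ ⊤ := ENNReal.pow_ne_top ENNReal.ofNat_ne_top
  have hbound : ∀ u ∈ T,
      groupMeasure m r {c | ∀ j, B c u (Pi.single j 1) = 0}
        ≤ ((2 : ENNReal) ^ ((m - 1) * r))⁻¹ := by
    intro u hu
    have hune : u ≠ 0 := (Finset.mem_erase.mp hu).1
    obtain ⟨i0, hi0⟩ : ∃ i0, u i0 ≠ 0 := Function.ne_iff.mp hune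
    have hu1 : u i0 = 1 := by
      have : ∀ x : ZMod 2, x ≠ 0 → x = 1 := by decide
      exact this _ hi0
    set S : Set (EdgeIdx m → Fin r → ZMod 2) :=
      {c | ∀ j, B c u (Pi.single j 1) = 0} with hS
    set E' := Fintype.card {e : EdgeIdx m // i0 ∉ e.1} with hE'
    have hcard : S.toFinite.toFinset.card ≤ (2 ^ r) ^ E' := by
      have := Finset.card_le_card_of_injOn
        (f := fun (c : EdgeIdx m → Fin r → ZMod 2)
          (e : {e : EdgeIdx m // i0 ∉ e.1}) => c e.1)
        (s := S.toFinite.toFinset) (t := Finset.univ)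
        (fun a _ => Finset.mem_univ _)
        (by rw [Set.Finite.coe_toFinset]; exact event_injOn u i0 hu1)
      have h2 : Fintype.card (Fin r → ZMod 2) = 2 ^ r := by
        simp [Fintype.card_fun]
      rw [Finset.card_univ, Fintype.card_fun, h2] at this
      exact this
    rw [gm_apply, card_edges_split (m := m) i0, ← hE']
    calc (S.toFinite.toFinset.card : ENNReal) * (((2 : ENNReal) ^ r)⁻¹) ^ (E' + (m - 1))
        ≤ ((2 : ENNReal) ^ r) ^ E' * (((2 : ENNReal) ^ r)⁻¹) ^ (E' + (m - 1)) := by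
          gcongr
          calc (S.toFinite.toFinset.card : ENNReal) ≤ (((2 ^ r) ^ E' : ℕ) : ENNReal) := by
                exact_mod_cast Nat.cast_le.mpr hcard
          _ = ((2 : ENNReal) ^ r) ^ E' := by push_cast; ring
    _ = (((2 : ENNReal) ^ r)⁻¹) ^ (m - 1) := by
          rw [pow_add, ← mul_assoc, ← mul_pow, ENNReal.mul_inv_cancel ha0 hatop, one_pow, one_mul]
    _ = ((2 : ENNReal) ^ ((m - 1) * r))⁻¹ := by
          rw [← ENNReal.inv_pow, ← pow_mul, mul_comm r (m - 1)]
  calc ∑ u ∈ T, groupMeasure m r {c | ∀ j, B c u (Pi.single j 1) = 0}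
      ≤ ∑ u ∈ T, ((2 : ENNReal) ^ ((m - 1) * r))⁻¹ := Finset.sum_le_sum hbound
  _ = (T.card : ENNReal) * ((2 : ENNReal) ^ ((m - 1) * r))⁻¹ := by
        rw [Finset.sum_const, nsmul_eq_mul]
  _ = ((2 : ENNReal) ^ m - 1) * ((2 : ENNReal) ^ ((m - 1) * r))⁻¹ := by
        congr 1
        rw [hT, Finset.card_erase_of_mem (Finset.mem_univ _), Finset.card_univ,
          Fintype.card_fun]
        have h1 : (1 : ℕ) ≤ 2 ^ m := Nat.one_le_two_pow
        push_cast [h1]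
        simp
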